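/- During an ordinal pivot from ordinal basis O to O' = O ∪ {j*} \ {j_ℓ} with leaving column j_ℓ (disliked by row i_ℓ), reference column j_r (disliked by row i_r), and entering column j*, the utility vector changes exactly as follows: u^{O'}_{i_ℓ} = c_{i_ℓ, j_r} > c_{i_ℓ, j_ℓ} = u^O_{i_ℓ}; u^{O'}_{i_r} = c_{i_r, j*} < c_{i_r, j_r} = u^O_{i_r}; and u^{O'}_i = u^O_i for every other row i. -/
import Mathlib


/-- `C` is an ordinal matrix. -/
def IsOrdinalMatrix {n m : ℕ} (hnm : n ≤ m) (C : Matrix (Fin n) (Fin m) ℝ) : Prop :=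
  (∀ i : Fin n, ∀ j k : Fin m, j ≠ k → C i j ≠ C i k) ∧
  (∀ i j : Fin n, i ≠ j → ∀ k : Fin m, n ≤ (k : ℕ) →
    C i (Fin.castLE hnm i) < C i k ∧ C i k < C i (Fin.castLE hnm j))

/-- Utility change during an ordinal pivot.  `O` is an ordinal basis, `j_ℓ ∈ O` the
leaving column disliked by row `i_ℓ`, `j_r` the reference column (minimizer of row `i_ℓ`
over `O \ {j_ℓ}`), `i_r` the row disliking `j_r` w.r.t. `O`, and `j*` the entering
column (the element of `K` maximizing `c_{i_r,·}`).  Then in `O' = O ∪ {j*} \ {j_ℓ}`: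
`u^{O'}_{i_ℓ} = c_{i_ℓ,j_r} > c_{i_ℓ,j_ℓ} = u^O_{i_ℓ}`,
`u^{O'}_{i_r} = c_{i_r,j*} < c_{i_r,j_r} = u^O_{i_r}`, and all other utilities stay. -/
theorem ordinal_pivot_utility_change {n m : ℕ} (hnm : n ≤ m)
    (C : Matrix (Fin n) (Fin m) ℝ) (hC : IsOrdinalMatrix hnm C)
    (O : Finset (Fin m)) (hOne : O.Nonempty) (hOcard : O.card = n)
    (hOdom : ∀ j : Fin m, ∃ i : Fin n, C i j ≤ O.inf' hOne (fun l => C i l))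
    (jl : Fin m) (hjl : jl ∈ O)
    (il : Fin n) (hil : O.inf' hOne (fun l => C il l) = C il jl)
    (hOe : (O.erase jl).Nonempty)
    (jr : Fin m) (hjrO : jr ∈ O.erase jl)
    (hjr : (O.erase jl).inf' hOe (fun l => C il l) = C il jr)
    (ir : Fin n) (hir : O.inf' hOne (fun l => C ir l) = C ir jr)
    (jstar : Fin m) (hjs_notin : jstar ∉ O)
    (hjsK : ∀ i : Fin n, i ≠ ir → (O.erase jl).inf' hOe (fun l => C i l) < C i jstar)
    (hjsmax : ∀ k : Fin m, k ∉ O →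
      (∀ i : Fin n, i ≠ ir → (O.erase jl).inf' hOe (fun l => C i l) < C i k) →
      C ir k ≤ C ir jstar)
    (hO'dom : ∀ j : Fin m, ∃ i : Fin n,
      C i j ≤ (insert jstar (O.erase jl)).inf' (Finset.insert_nonempty _ _) (fun l => C i l)) :
    ((insert jstar (O.erase jl)).inf' (Finset.insert_nonempty _ _) (fun l => C il l) = C il jr
      ∧ C il jl < C il jr) ∧
    ((insert jstar (O.erase jl)).inf' (Finset.insert_nonempty _ _) (fun l => C ir l) = C ir jstar
      ∧ C ir jstar < C ir jr) ∧
    (∀ i : Fin n, i ≠ il → i ≠ ir →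
      (insert jstar (O.erase jl)).inf' (Finset.insert_nonempty _ _) (fun l => C i l)
        = O.inf' hOne (fun l => C i l)) := by

  obtain ⟨hdist, -⟩ := hC
  have hgle := hOdom
  choose g hgle using hgle
  have hgeq : ∀ j ∈ O, O.inf' hOne (fun l => C (g j) l) = C (g j) j := fun j hj =>
    le_antisymm (Finset.inf'_le _ hj) (hgle j)
  have hinj : Set.InjOn g O := by
    intro j hj j' hj' h
    by_contra hne
    have h1 := hgeq j hj
    have h2 := hgeq j' hj'
    rw [h] at h1
    exact hdist (g j') j j' hne (h1.symm.trans h2)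
  have hsurj : ∀ i : Fin n, ∃ j ∈ O, g j = i := by
    have hcard : (O.image g).card = n := by
      rw [Finset.card_image_of_injOn hinj, hOcard]
    have huniv : O.image g = Finset.univ :=
      Finset.eq_univ_of_card _ (by simp [hcard])
    intro i
    have : i ∈ O.image g := huniv ▸ Finset.mem_univ i
    simpa using this
  have hargmin_unique : ∀ i : Fin n, ∀ j ∈ O, ∀ j' ∈ O,
      O.inf' hOne (fun l => C i l) = C i j →
      O.inf' hOne (fun l => C i l) = C i j' → j = j' := by
    intro i j hj j' hj' h1 h2
    by_contra hne
    exact hdist i j j' hne (h1.symm.trans h2)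
  have hUjl : ∀ i : Fin n, O.inf' hOne (fun l => C i l) = C i jl → i = il := by
    intro i hi
    obtain ⟨j, hj, hji⟩ := hsurj i
    obtain ⟨j', hj', hji'⟩ := hsurj il
    have e1 := hgeq j hj
    have e2 := hgeq j' hj'
    rw [hji] at e1
    rw [hji'] at e2
    have h1 : j = jl := hargmin_unique i j hj jl hjl e1 hi
    have h1' : j' = jl := hargmin_unique il j' hj' jl hjl e2 hil
    rw [← hji, h1, ← hji', h1']
  have hjrne : jr ≠ jl := (Finset.mem_erase.mp hjrO).1
  have hjrO' : jr ∈ O := Finset.mem_of_mem_erase hjrO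
  have hilr : il ≠ ir := by
    intro h
    subst h
    exact hdist il jl jr (Ne.symm hjrne) (hil.symm.trans hir)
  have huv : ∀ i : Fin n,
      O.inf' hOne (fun l => C i l) ≤ (O.erase jl).inf' hOe (fun l => C i l) := by
    intro i
    obtain ⟨l, hl, hle⟩ := Finset.exists_mem_eq_inf' hOe (fun l => C i l)
    calc O.inf' hOne (fun l => C i l) ≤ C i l :=
        Finset.inf'_le _ (Finset.mem_of_mem_erase hl)
    _ = _ := hle.symm
  have hCvi : ∀ i : Fin n, i ≠ il →
      (O.erase jl).inf' hOe (fun l => C i l) = O.inf' hOne (fun l => C i l) := by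
    intro i hi
    obtain ⟨j, hj, hje⟩ := Finset.exists_mem_eq_inf' hOne (fun l => C i l)
    have hjne : j ≠ jl := by
      intro h; exact hi (hUjl i (by rw [hje, h]))
    refine le_antisymm ?_ (huv i)
    calc (O.erase jl).inf' hOe (fun l => C i l) ≤ C i j :=
        Finset.inf'_le _ (Finset.mem_erase.mpr ⟨hjne, hj⟩)
    _ = _ := hje.symm
  have hjsne : jstar ≠ jr := fun h => hjs_notin (h ▸ hjrO')
  have hstar_lt : C ir jstar < C ir jr := by
    have hi := hgle jstar
    have hieq : g jstar = ir := by
      by_contra hne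
      exact absurd (hi.trans (huv (g jstar))) (not_le.mpr (hjsK (g jstar) hne))
    rw [hieq] at hi
    have hle : C ir jstar ≤ C ir jr := by
      calc C ir jstar ≤ O.inf' hOne (fun l => C ir l) := hi
      _ = C ir jr := hir
    exact lt_of_le_of_ne hle (hdist ir jstar jr hjsne)
  have hins : ∀ i : Fin n,
      (insert jstar (O.erase jl)).inf' (Finset.insert_nonempty _ _) (fun l => C i l)
        = C i jstar ⊓ (O.erase jl).inf' hOe (fun l => C i l) :=
    fun i => Finset.inf'_insert hOe (fun l => C i l)
  refine ⟨⟨?_, ?_⟩, ⟨?_, hstar_lt⟩, ?_⟩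
  · rw [hins il, hjr]
    have hlt : C il jr < C il jstar := by
      have := hjsK il hilr
      rwa [hjr] at this
    exact inf_eq_right.mpr hlt.le
  · have hle : C il jl ≤ C il jr := by
      calc C il jl = O.inf' hOne (fun l => C il l) := hil.symm
      _ ≤ C il jr := Finset.inf'_le _ hjrO'
    exact lt_of_le_of_ne hle (hdist il jl jr (Ne.symm hjrne))
  · rw [hins ir, hCvi ir (Ne.symm hilr), hir]
    exact inf_eq_left.mpr hstar_lt.le
  · intro i hil' hir'
    rw [hins i, inf_eq_right.mpr (hjsK i hir').le, hCvi i hil']
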